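/- Let l ≥ 1 and m ≥ 1 be integers and C = I_l + m·E_l ∈ Mat_l(ℤ). For i = 1, ..., l−1 define ε_i := E_ii − E_li in the ring Mat_l(ℤ)_C (with multiplication A ·_C B = ACB). Then ε_1, ..., ε_{l−1} are pairwise orthogonal idempotents of Mat_l(ℤ)_C. -/

import Mathlib

lemma key_stmt6 {l : ℕ} (M : Matrix (Fin l) (Fin l) ℤ) (a b c d : Fin l) :
    Matrix.single a b (1:ℤ) * M * Matrix.single c d 1
      = M b c • Matrix.single a d 1 := by
  ext x y
  simp [Matrix.mul_apply, Matrix.single, Finset.sum_ite_eq, ite_and,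
    Finset.mul_sum, mul_comm]
  split_ifs <;> simp_all

lemma main_stmt6 {l : ℕ} (C : Matrix (Fin l) (Fin l) ℤ) (last i j : Fin l) :
    (Matrix.single i i (1:ℤ) - Matrix.single last i 1) * C *
      (Matrix.single j j (1:ℤ) - Matrix.single last j 1)
    = (C i j - C i last) • (Matrix.single i j (1:ℤ)
        - Matrix.single last j 1) := by
  simp only [sub_mul, mul_sub, key_stmt6, smul_sub, sub_smul]
  abel

/-- Let `l ≥ 1`, `m ≥ 1` and `C = I_l + m·E_l ∈ Mat_l(ℤ)`.  For
`i = 1, …, l−1` set `ε_i := E_ii − E_li`.  Then the `ε_i` are pairwise orthogonal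
idempotents of the ring `Mat_l(ℤ)_C` (multiplication `A ·_C B = A * C * B`). -/
theorem stmt6 {l : ℕ} (hl : 1 ≤ l) (m : ℤ) (hm : 1 ≤ m)
    (C : Matrix (Fin l) (Fin l) ℤ)
    (hC : C = 1 + m • Matrix.of (fun _ _ => (1 : ℤ)))
    (last : Fin l) (hlast : (last : ℕ) = l - 1)
    (ε : Fin l → Matrix (Fin l) (Fin l) ℤ)
    (hε : ∀ i : Fin l, ε i =
      Matrix.single i i (1 : ℤ) - Matrix.single last i 1) :
    (∀ i : Fin l, (i : ℕ) < l - 1 → ε i * C * ε i = ε i) ∧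
    (∀ i j : Fin l, (i : ℕ) < l - 1 → (j : ℕ) < l - 1 → i ≠ j →
      ε i * C * ε j = 0) := by
  have hCval : ∀ a b : Fin l, C a b = (if a = b then (1:ℤ) else 0) + m := by
    intro a b
    simp [hC, Matrix.one_apply]
  constructor
  · intro i hi
    have hne : i ≠ last := by
      intro h; rw [h, hlast] at hi; exact lt_irrefl _ hi
    rw [hε, main_stmt6, hCval, hCval, if_pos rfl, if_neg hne]
    simp [hε]
  · intro i j hi hj hij
    have hne : i ≠ last := by
      intro h; rw [h, hlast] at hi; exact lt_irrefl _ hi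
    rw [hε, hε, main_stmt6, hCval, hCval, if_neg hij, if_neg hne]
    simp
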